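/- Let (𝒳, 𝒮, μ) be a probability space, let 𝒞 ⊆ 𝒮 be a separable family with finite VC dimension, and let {μₙ} be a sequence of finite measures on (𝒳, 𝒮) such that μₙ(A) → μ(A) for every A ∈ σ(𝒞), the sigma-field generated by 𝒞. Then sup_{C ∈ 𝒞} |μₙ(C) − μ(C)| → 0 as n → ∞. -/

import Mathlib

open MeasureTheory Set Filter

/-- `𝒞` shatters the finite set `D` if every subset of `D` is cut out by some `C ∈ 𝒞`. -/
def Shatters {X : Type*} (𝒞 : Set (Set X)) (D : Finset X) : Prop :=
  ∀ B ⊆ D, ∃ C ∈ 𝒞, ∀ x ∈ D, x ∈ C ↔ x ∈ B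

/-- `𝒞` has finite VC dimension: the cardinalities of shattered finite sets are bounded. -/
def FiniteVC {X : Type*} (𝒞 : Set (Set X)) : Prop :=
  ∃ k : ℕ, ∀ D : Finset X, Shatters 𝒞 D → D.card ≤ k

/-- `π` is a finite measurable partition of the whole space. -/
def IsFinitePartition {X : Type*} [MeasurableSpace X] (π : Set (Set X)) : Prop :=
  π.Finite ∧ (∀ A ∈ π, MeasurableSet A) ∧
    (∀ A ∈ π, ∀ B ∈ π, A ≠ B → Disjoint A B) ∧ ⋃₀ π = Set.univ

/-- The `π`-boundary of `C`: union of the cells of `π` meeting both `C` and `Cᶜ`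
with positive measure. -/
def piBoundary {X : Type*} [MeasurableSpace X] (μ : Measure X) (π : Set (Set X))
    (C : Set X) : Set X :=
  ⋃₀ {A ∈ π | 0 < μ (A ∩ C) * μ (A ∩ Cᶜ)}

/-- `𝒞` is finitely approximable w.r.t. `μ`: for every `ε > 0` there is a finite measurable
partition `π` such that `μ (∂(C : π)) ≤ ε` for every `C ∈ 𝒞`. -/
def FinitelyApproximable {X : Type*} [MeasurableSpace X] (μ : Measure X)
    (𝒞 : Set (Set X)) : Prop :=
  ∀ ε : ENNReal, 0 < ε → ∃ π : Set (Set X), IsFinitePartition π ∧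
    ∀ C ∈ 𝒞, μ (piBoundary μ π C) ≤ ε

/-- A family of sets is separable if some countable subfamily `𝒞₀ ⊆ 𝒞` is pointwise dense:
every `C ∈ 𝒞` is a pointwise limit (of indicator functions) of a sequence from `𝒞₀`. -/
def SeparableSetFamily {X : Type*} (𝒞 : Set (Set X)) : Prop :=
  ∃ 𝒞₀ ⊆ 𝒞, 𝒞₀.Countable ∧ ∀ C ∈ 𝒞, ∃ g : ℕ → Set X, (∀ n, g n ∈ 𝒞₀) ∧
    ∀ x : X, ∀ᶠ n in Filter.atTop, (x ∈ g n ↔ x ∈ C)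

/-- The family `ℱ` of real functions has finite bracketing numbers w.r.t. `μ`: for every
`ε > 0` finitely many `ε`-brackets (pairs of measurable functions `g ≤ h` with
`∫ (h - g) dμ ≤ ε`) cover `ℱ`. -/
def FiniteBracketing {X : Type*} [MeasurableSpace X] (μ : Measure X)
    (ℱ : Set (X → ℝ)) : Prop :=
  ∀ ε : ℝ, 0 < ε → ∃ n : ℕ, ∃ g h : Fin n → X → ℝ,
    (∀ i, Measurable (g i) ∧ Measurable (h i) ∧ (∀ x, g i x ≤ h i x) ∧
      ∫⁻ x, ENNReal.ofReal (h i x - g i x) ∂μ ≤ ENNReal.ofReal ε) ∧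
    ∀ f ∈ ℱ, ∃ i, ∀ x, g i x ≤ f x ∧ f x ≤ h i x

open scoped ENNReal NNReal symmDiff

/-- A set is contained in the union of another set and their symmetric difference. -/
lemma subset_union_symmDiff {X : Type*} (A B : Set X) : A ⊆ B ∪ symmDiff A B := by
  intro x hx
  by_cases hB : x ∈ B
  · exact Or.inl hB
  · exact Or.inr (Set.mem_symmDiff.2 (Or.inl ⟨hx, hB⟩))

lemma measure_le_add_symmDiff {X : Type*} [MeasurableSpace X] (ρ : Measure X) (A B : Set X) :
    ρ A ≤ ρ B + ρ (symmDiff A B) :=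
  le_trans (measure_mono (subset_union_symmDiff A B)) (measure_union_le _ _)

lemma abs_toReal_sub_le_symmDiff {X : Type*} [MeasurableSpace X] (ρ : Measure X)
    [IsFiniteMeasure ρ] (A B : Set X) :
    |(ρ A).toReal - (ρ B).toReal| ≤ (ρ (symmDiff A B)).toReal := by
  rw [abs_sub_le_iff]
  constructor
  · have h := measure_le_add_symmDiff ρ A B
    have h2 : (ρ A).toReal ≤ ((ρ B) + ρ (symmDiff A B)).toReal :=
      ENNReal.toReal_mono (by finiteness) h
    rw [ENNReal.toReal_add (by finiteness) (by finiteness)] at h2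
    linarith
  · have h := measure_le_add_symmDiff ρ B A
    have h2 : (ρ B).toReal ≤ ((ρ A) + ρ (symmDiff B A)).toReal :=
      ENNReal.toReal_mono (by finiteness) h
    rw [ENNReal.toReal_add (by finiteness) (by finiteness), symmDiff_comm] at h2
    linarith

/-- Sampling lemma: if all pairs in `F` are separated in `ν`-measure, and the number of
pairs beats the geometric decay, one can find finitely many points separating all pairs. -/
lemma exists_separating_points {X : Type*} [MeasurableSpace X] (ν : Measure X)
    [IsProbabilityMeasure ν] {F : Finset (Set X)} (hmeas : ∀ C ∈ F, MeasurableSet C)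
    {q : ℝ≥0∞} (hq : ∀ C ∈ F, ∀ D ∈ F, C ≠ D → ν ((symmDiff C D)ᶜ) ≤ q) (n : ℕ)
    (hn : (F.card : ℝ≥0∞) ^ 2 * q ^ n < 1) :
    ∃ ω : Fin n → X, ∀ C ∈ F, ∀ D ∈ F, C ≠ D → ∃ i, ω i ∈ symmDiff C D := by
  classical
  set P : Measure (Fin n → X) := Measure.pi (fun _ => ν) with hP
  haveI : IsProbabilityMeasure P := by
    constructor
    rw [hP, ← Set.pi_univ Set.univ, Measure.pi_pi]
    simp
  set T : Set X × Set X → Set (Fin n → X) :=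
    fun p => if p.1 = p.2 then ∅ else {ω | ∀ i, ω i ∈ (symmDiff p.1 p.2)ᶜ} with hT
  have hTle : ∀ p ∈ F ×ˢ F, P (T p) ≤ q ^ n := by
    intro p hp
    rw [Finset.mem_product] at hp
    by_cases hd : p.1 = p.2
    · simp [hT, hd]
    · have hTp : T p = Set.pi Set.univ (fun _ : Fin n => (symmDiff p.1 p.2)ᶜ) := by
        simp only [hT, if_neg hd]
        ext ω
        simp [Set.mem_pi]
      rw [hTp, hP, Measure.pi_pi]
      rw [Finset.prod_const, Finset.card_univ, Fintype.card_fin]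
      exact pow_le_pow_left' (hq p.1 hp.1 p.2 hp.2 hd) n
  have hPU : P (⋃ p ∈ F ×ˢ F, T p) < 1 := by
    calc P (⋃ p ∈ F ×ˢ F, T p) ≤ ∑ p ∈ F ×ˢ F, P (T p) := measure_biUnion_finset_le _ _
    _ ≤ ∑ _p ∈ F ×ˢ F, q ^ n := Finset.sum_le_sum hTle
    _ = ((F ×ˢ F).card : ℝ≥0∞) * q ^ n := by
        rw [Finset.sum_const, nsmul_eq_mul]
    _ = (F.card : ℝ≥0∞) ^ 2 * q ^ n := by
        rw [Finset.card_product]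
        push_cast
        ring_nf
    _ < 1 := hn
  have hne : (⋃ p ∈ F ×ˢ F, T p) ≠ Set.univ := by
    intro h
    rw [h] at hPU
    simp at hPU
  obtain ⟨ω, hω⟩ := (Set.ne_univ_iff_exists_notMem _).1 hne
  refine ⟨ω, fun C hC D hD hCD => ?_⟩
  have hmem : ω ∉ T (C, D) := by
    intro hmem
    exact hω (Set.mem_biUnion (Finset.mem_product.2 ⟨hC, hD⟩) hmem)
  simp only [hT, if_neg hCD, Set.mem_setOf_eq] at hmem
  push_neg at hmem
  obtain ⟨i, hi⟩ := hmem
  exact ⟨i, not_not.1 hi⟩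

/-- Trace counting: if finitely many points separate all pairs of `F ⊆ 𝒞`, then `F.card` is
bounded by the Sauer–Shelah bound. -/
lemma card_le_sauer {X : Type*} {𝒞 : Set (Set X)} {k : ℕ}
    (hVC : ∀ D : Finset X, Shatters 𝒞 D → D.card ≤ k)
    {F : Finset (Set X)} (hF : ↑F ⊆ 𝒞) {n : ℕ} (ω : Fin n → X)
    (hsep : ∀ C ∈ F, ∀ D ∈ F, C ≠ D → ∃ i, ω i ∈ symmDiff C D) :
    F.card ≤ ∑ i ∈ Finset.range (k + 1), n.choose i := by
  classical
  set D₀ : Finset X := Finset.image ω Finset.univ with hD₀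
  have hD₀card : D₀.card ≤ n := le_trans (Finset.card_image_le) (by simp)
  set tr : Set X → Finset X := fun C => D₀.filter (· ∈ C) with htr
  have hinj : Set.InjOn tr ↑F := by
    intro C hC D hD h
    by_contra hne
    obtain ⟨i, hi⟩ := hsep C hC D hD hne
    have hiD₀ : ω i ∈ D₀ := Finset.mem_image.2 ⟨i, Finset.mem_univ i, rfl⟩
    rw [Set.mem_symmDiff] at hi
    rcases hi with ⟨h1, h2⟩ | ⟨h1, h2⟩
    · have : ω i ∈ tr C := Finset.mem_filter.2 ⟨hiD₀, h1⟩
      rw [h] at this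
      exact h2 (Finset.mem_filter.1 this).2
    · have : ω i ∈ tr D := Finset.mem_filter.2 ⟨hiD₀, h1⟩
      rw [← h] at this
      exact h2 (Finset.mem_filter.1 this).2
  set 𝒜 : Finset (Finset X) := F.image tr with h𝒜
  have hcard : 𝒜.card = F.card := Finset.card_image_of_injOn hinj
  have hsub : ∀ u ∈ 𝒜, u ⊆ D₀ := by
    intro u hu
    obtain ⟨C, _, rfl⟩ := Finset.mem_image.1 hu
    exact Finset.filter_subset _ _
  -- every set shattered by 𝒜 is shattered by 𝒞, hence has card ≤ k
  have hshat : ∀ s ∈ 𝒜.shatterer, s.card ≤ k := by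
    intro s hs
    rw [Finset.mem_shatterer] at hs
    refine hVC s (fun B hB => ?_)
    obtain ⟨u, hu, huB⟩ := hs hB
    obtain ⟨C, hCF, rfl⟩ := Finset.mem_image.1 hu
    have hsD₀ : s ⊆ D₀ := by
      obtain ⟨u', hu', hsu'⟩ := hs.exists_superset
      exact hsu'.trans (hsub u' hu')
    refine ⟨C, hF hCF, fun x hx => ?_⟩
    constructor
    · intro hxC
      have : x ∈ s ∩ tr C := Finset.mem_inter.2 ⟨hx, Finset.mem_filter.2 ⟨hsD₀ hx, hxC⟩⟩
      rw [huB] at this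
      exact this
    · intro hxB
      have : x ∈ s ∩ tr C := huB ▸ hxB
      exact (Finset.mem_filter.1 (Finset.mem_inter.1 this).2).2
  -- Sauer-Shelah
  have h1 : F.card ≤ 𝒜.shatterer.card := hcard ▸ Finset.card_le_card_shatterer 𝒜
  have h2 : 𝒜.shatterer ⊆ (Finset.range (k + 1)).biUnion (fun i => D₀.powersetCard i) := by
    intro s hs
    have hsk : s.card ≤ k := hshat s hs
    have hsD₀ : s ⊆ D₀ := by
      have hs' := Finset.mem_shatterer.1 hs
      obtain ⟨u', hu', hsu'⟩ := hs'.exists_superset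
      exact hsu'.trans (hsub u' hu')
    exact Finset.mem_biUnion.2 ⟨s.card, Finset.mem_range.2 (Nat.lt_succ_of_le hsk),
      Finset.mem_powersetCard.2 ⟨hsD₀, rfl⟩⟩
  calc F.card ≤ 𝒜.shatterer.card := h1
  _ ≤ ∑ i ∈ Finset.range (k + 1), (D₀.powersetCard i).card :=
      le_trans (Finset.card_le_card h2) (Finset.card_biUnion_le)
  _ ≤ ∑ i ∈ Finset.range (k + 1), n.choose i := by
      refine Finset.sum_le_sum fun i _ => ?_
      rw [Finset.card_powersetCard]
      exact Nat.choose_le_choose i hD₀card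

/-- A VC class is totally bounded in `L¹(ν)` for any probability measure `ν`. -/
lemma exists_net {X : Type*} [MeasurableSpace X] (ν : Measure X) [IsProbabilityMeasure ν]
    (𝒞 : Set (Set X)) (h𝒞 : ∀ C ∈ 𝒞, MeasurableSet C) (hVC : FiniteVC 𝒞)
    {δ : ℝ≥0∞} (hδ : 0 < δ) :
    ∃ F : Finset (Set X), ↑F ⊆ 𝒞 ∧ ∀ C ∈ 𝒞, ∃ D ∈ F, ν (symmDiff C D) ≤ δ := by
  classical
  by_contra hcon
  push_neg at hcon
  -- greedy construction of arbitrarily large δ-separated families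
  have key : ∀ m : ℕ, ∃ F : Finset (Set X), ↑F ⊆ 𝒞 ∧ F.card = m ∧
      ∀ C ∈ F, ∀ D ∈ F, C ≠ D → δ < ν (symmDiff C D) := by
    intro m
    induction m with
    | zero => exact ⟨∅, by simp⟩
    | succ m ih =>
      obtain ⟨F, hF, hcard, hsep⟩ := ih
      obtain ⟨C, hC𝒞, hC⟩ := hcon F hF
      have hCF : C ∉ F := fun hmem => by simpa using hC C hmem
      refine ⟨insert C F, ?_, by rw [Finset.card_insert_of_notMem hCF, hcard], ?_⟩
      · intro D hD
        rcases Finset.mem_insert.1 (by exact_mod_cast hD) with h | h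
        · exact h ▸ hC𝒞
        · exact hF (by exact_mod_cast h)
      · intro A hA B hB hAB
        rcases Finset.mem_insert.1 hA with hA' | hA' <;>
          rcases Finset.mem_insert.1 hB with hB' | hB'
        · exact absurd (hA'.trans hB'.symm) hAB
        · exact hA' ▸ hC B hB'
        · rw [symmDiff_comm]
          exact hB' ▸ hC A hA'
        · exact hsep A hA' B hB' hAB
  obtain ⟨k, hk⟩ := hVC
  -- the separation level in [0,1]
  set δ' : ℝ≥0∞ := min δ 1 with hδ'def
  have hδ'pos : 0 < δ' := lt_min hδ one_pos
  have hδ'le : δ' ≤ 1 := min_le_right _ _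
  set qE : ℝ≥0∞ := 1 - δ' with hqEdef
  have hqEne : qE ≠ ⊤ := by
    refine ne_top_of_le_ne_top (by simp) tsub_le_self
  have hqElt : qE < 1 := ENNReal.sub_lt_self (by simp) (by simp) (ne_of_gt hδ'pos)
  set r : ℝ := qE.toReal with hrdef
  have hr0 : 0 ≤ r := ENNReal.toReal_nonneg
  have hr1 : r < 1 := by
    have := (ENNReal.toReal_lt_toReal hqEne (by simp)).2 hqElt
    simpa using this
  set s : ℕ → ℕ := fun n => ∑ i ∈ Finset.range (k + 1), n.choose i with hsdef
  -- find n with ((s n + 1 : ℕ) : ℝ)^2 * r^n < 1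
  have hfind : ∃ n : ℕ, ((s n + 1 : ℕ) : ℝ) ^ 2 * r ^ n < 1 := by
    have hsbound : ∀ n : ℕ, ((s n + 1 : ℕ) : ℝ) ≤ ((k + 2) : ℝ) * ((n + 1 : ℕ) : ℝ) ^ k := by
      intro n
      have h1 : s n + 1 ≤ (k + 2) * (n + 1) ^ k := by
        have h2 : s n ≤ (k + 1) * (n + 1) ^ k := by
          calc s n ≤ ∑ _i ∈ Finset.range (k + 1), (n + 1) ^ k := by
                refine Finset.sum_le_sum fun i hi => ?_
                calc n.choose i ≤ n ^ i := Nat.choose_le_pow n i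
                _ ≤ (n + 1) ^ i := Nat.pow_le_pow_left (Nat.le_succ n) i
                _ ≤ (n + 1) ^ k := Nat.pow_le_pow_right (Nat.le_add_left 1 n)
                    (Nat.lt_succ_iff.1 (Finset.mem_range.1 hi))
          _ = (k + 1) * (n + 1) ^ k := by rw [Finset.sum_const, Finset.card_range, smul_eq_mul]
        have h3 : 1 ≤ (n + 1) ^ k := Nat.one_le_pow k (n + 1) (Nat.succ_pos n)
        calc s n + 1 ≤ (k + 1) * (n + 1) ^ k + (n + 1) ^ k := by omega
        _ = (k + 2) * (n + 1) ^ k := by ring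
      exact_mod_cast h1
    rcases eq_or_lt_of_le hr0 with hr0' | hr0'
    · refine ⟨1, ?_⟩
      rw [← hr0', pow_one, mul_zero]
      norm_num
    · -- geometric decay beats polynomial growth
      have htend : Tendsto (fun j : ℕ => (j : ℝ) ^ (2 * k) * r ^ j) atTop (nhds 0) := by
        refine (summable_pow_mul_geometric_of_norm_lt_one (R := ℝ) (2 * k) ?_).tendsto_atTop_zero
        rwa [Real.norm_eq_abs, abs_of_nonneg hr0]
      have hq : (0 : ℝ) < r / ((k + 2 : ℝ)) ^ 2 := by positivity
      have := htend.eventually (gt_mem_nhds hq)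
      obtain ⟨J, hJ⟩ := eventually_atTop.1 this
      set j := max J 1 with hjdef
      have hj1 : 1 ≤ j := le_max_right _ _
      have hja : (j : ℝ) ^ (2 * k) * r ^ j < r / ((k + 2 : ℝ)) ^ 2 := hJ j (le_max_left _ _)
      refine ⟨j - 1, ?_⟩
      have hjj : j - 1 + 1 = j := Nat.succ_pred_eq_of_pos hj1
      set A : ℝ := ((k + 2 : ℝ)) ^ 2 * (j : ℝ) ^ (2 * k) * r ^ (j - 1) with hA
      have hrj : r ^ j = r ^ (j - 1) * r := by rw [← pow_succ, hjj]
      have hA1 : A < 1 := by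
        have h5 : ((k + 2 : ℝ)) ^ 2 * ((j : ℝ) ^ (2 * k) * r ^ j) <
            ((k + 2 : ℝ)) ^ 2 * (r / ((k + 2 : ℝ)) ^ 2) :=
          mul_lt_mul_of_pos_left hja (by positivity)
        have h5' : ((k + 2 : ℝ)) ^ 2 * (r / ((k + 2 : ℝ)) ^ 2) = r := by field_simp
        have h6 : r * A < r * 1 := by
          rw [hA, mul_one]
          calc r * (((k + 2 : ℝ)) ^ 2 * (j : ℝ) ^ (2 * k) * r ^ (j - 1))
              = ((k + 2 : ℝ)) ^ 2 * ((j : ℝ) ^ (2 * k) * r ^ j) := by rw [hrj]; ring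
          _ < r := h5.trans_le (le_of_eq h5')
        exact lt_of_mul_lt_mul_left h6 (le_of_lt hr0')
      have hb : ((s (j - 1) + 1 : ℕ) : ℝ) ^ 2 * r ^ (j - 1) ≤ A := by
        have h8 := hsbound (j - 1)
        rw [hjj] at h8
        have h7 : ((s (j - 1) + 1 : ℕ) : ℝ) ^ 2 ≤ (((k + 2) : ℝ) * (j : ℝ) ^ k) ^ 2 :=
          pow_le_pow_left₀ (by positivity) h8 2
        calc ((s (j - 1) + 1 : ℕ) : ℝ) ^ 2 * r ^ (j - 1)
            ≤ (((k + 2) : ℝ) * (j : ℝ) ^ k) ^ 2 * r ^ (j - 1) :=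
              mul_le_mul_of_nonneg_right h7 (by positivity)
        _ = A := by
            rw [hA, mul_pow, ← pow_mul, Nat.mul_comm k 2]
      exact lt_of_le_of_lt hb hA1
  obtain ⟨n, hn⟩ := hfind
  obtain ⟨F, hF𝒞, hFcard, hFsep⟩ := key (s n + 1)
  have hFmeas : ∀ C ∈ F, MeasurableSet C := fun C hC => h𝒞 C (hF𝒞 hC)
  have hqpair : ∀ C ∈ F, ∀ D ∈ F, C ≠ D → ν ((symmDiff C D)ᶜ) ≤ qE := by
    intro C hC D hD hCD
    have hmeasCD : MeasurableSet (symmDiff C D) :=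
      ((hFmeas C hC).diff (hFmeas D hD)).union ((hFmeas D hD).diff (hFmeas C hC))
    rw [measure_compl hmeasCD (measure_ne_top ν _), measure_univ]
    have h9 : δ' ≤ ν (symmDiff C D) :=
      le_trans (min_le_left δ 1) (le_of_lt (hFsep C hC D hD hCD))
    exact tsub_le_tsub_left h9 1
  have hlt : (F.card : ℝ≥0∞) ^ 2 * qE ^ n < 1 := by
    have hne : (F.card : ℝ≥0∞) ^ 2 * qE ^ n ≠ ⊤ :=
      ENNReal.mul_ne_top (ENNReal.pow_ne_top (ENNReal.natCast_ne_top _))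
        (ENNReal.pow_ne_top hqEne)
    rw [← ENNReal.toReal_lt_toReal hne (by simp), ENNReal.toReal_mul, ENNReal.toReal_pow,
      ENNReal.toReal_pow, ENNReal.toReal_natCast, ENNReal.toReal_one, hFcard]
    exact_mod_cast hn
  obtain ⟨ω, hω⟩ := exists_separating_points ν hFmeas hqpair n hlt
  have hle := card_le_sauer hk hF𝒞 ω hω
  rw [hFcard] at hle
  exact Nat.not_succ_le_self _ hle

section UAC

variable {X : Type*} [m0 : MeasurableSpace X]

/-- Uniform absolute continuity (Vitali–Hahn–Saks style) for a setwise convergent sequence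
of measures, via the Baire category theorem. -/
lemma uniform_ac (S : MeasurableSpace X) (hS : S ≤ m0)
    (lam : @MeasureTheory.Measure X m0) [IsFiniteMeasure lam]
    (μ : @MeasureTheory.Measure X m0) [IsFiniteMeasure μ]
    (μs : ℕ → @MeasureTheory.Measure X m0) (hfin : ∀ n, IsFiniteMeasure (μs n))
    (hμle : ∀ A : Set X, MeasurableSet[S] A → μ A ≤ lam A)
    (c : ℕ → ℝ≥0∞) (hc0 : ∀ n, c n ≠ 0) (hc : ∀ n, c n ≠ ⊤)
    (hcle : ∀ n, ∀ A : Set X, MeasurableSet[S] A → μs n A ≤ c n * lam A)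
    (hconv : ∀ A : Set X, MeasurableSet[S] A → Tendsto (fun n => μs n A) atTop (nhds (μ A)))
    (ε : ℝ) (hε : 0 < ε) :
    ∃ δ : ℝ≥0∞, 0 < δ ∧ ∀ B : Set X, MeasurableSet[S] B → lam B ≤ δ →
      ∀ n, μs n B ≤ ENNReal.ofReal ε := by
  classical
  -- the pseudo-emetric space of S-measurable sets
  letI M := {A : Set X // MeasurableSet[S] A}
  letI instE : PseudoEMetricSpace M :=
    { edist := fun A B => lam (symmDiff A.1 B.1)
      edist_self := fun A => by simp
      edist_comm := fun A B => by simp only [symmDiff_comm]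
      edist_triangle := fun A B C =>
        le_trans (measure_mono (symmDiff_triangle A.1 B.1 C.1))
          (measure_union_le _ _) }
  letI instU : UniformSpace M := instE.toUniformSpace
  letI instT : TopologicalSpace M := UniformSpace.toTopologicalSpace
  have hedist : ∀ A B : M, edist A B = lam (symmDiff A.1 B.1) := fun _ _ => rfl
  haveI : CompleteSpace M := by
    apply EMetric.complete_of_convergent_controlled_sequences (fun n => (2 : ℝ≥0∞)⁻¹ ^ n)
      (fun n => ENNReal.pow_pos (by norm_num) n)
    intro u hu
    set L : Set X := ⋂ N : ℕ, ⋃ j : ℕ, ⋃ (_ : N ≤ j), (u j).1 with hL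
    have hLmeas : MeasurableSet[S] L :=
      MeasurableSet.iInter fun N => MeasurableSet.iUnion fun j =>
        MeasurableSet.iUnion fun _ => (u j).2
    refine ⟨⟨L, hLmeas⟩, ?_⟩
    have hincl : ∀ n : ℕ, symmDiff (u n).1 L ⊆
        ⋃ j : ℕ, symmDiff (u (n + j)).1 (u (n + j + 1)).1 := by
      intro n x hx
      rw [Set.mem_symmDiff] at hx
      rcases hx with ⟨hxu, hxL⟩ | ⟨hxL, hxu⟩
      · -- x ∈ u n, x ∉ L
        have : ∃ N : ℕ, ∀ j : ℕ, N ≤ j → x ∉ (u j).1 := by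
          by_contra hcc
          push_neg at hcc
          exact hxL (Set.mem_iInter.2 fun N => by
            obtain ⟨j, hj1, hj2⟩ := hcc N
            exact Set.mem_iUnion.2 ⟨j, Set.mem_iUnion.2 ⟨hj1, hj2⟩⟩)
        obtain ⟨N, hN⟩ := this
        have hex : ∃ i : ℕ, x ∉ (u (n + i)).1 := ⟨N, hN (n + N) (Nat.le_add_left N n)⟩
        set i := Nat.find hex with hi
        have hspec : x ∉ (u (n + i)).1 := Nat.find_spec hex
        have hipos : i ≠ 0 := by
          intro h0
          rw [h0] at hspec
          exact hspec (by simpa using hxu)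
        have hprev : x ∈ (u (n + (i - 1))).1 := by
          by_contra hxp
          exact absurd (Nat.find_min hex (show i - 1 < i by omega)) (by simpa using hxp)
        refine Set.mem_iUnion.2 ⟨i - 1, Set.mem_symmDiff.2 (Or.inl ⟨hprev, ?_⟩)⟩
        rwa [show n + (i - 1) + 1 = n + i by omega]
      · -- x ∈ L, x ∉ u n
        have hfreq : ∃ i : ℕ, x ∈ (u (n + i)).1 := by
          have := Set.mem_iInter.1 hxL n
          obtain ⟨j, hj⟩ := Set.mem_iUnion.1 this
          obtain ⟨hj1, hj2⟩ := Set.mem_iUnion.1 hj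
          exact ⟨j - n, by rwa [show n + (j - n) = j by omega]⟩
        set i := Nat.find hfreq with hi
        have hspec : x ∈ (u (n + i)).1 := Nat.find_spec hfreq
        have hipos : i ≠ 0 := by
          intro h0
          rw [h0] at hspec
          exact hxu (by simpa using hspec)
        have hprev : x ∉ (u (n + (i - 1))).1 := by
          intro hxp
          exact absurd (Nat.find_min hfreq (show i - 1 < i by omega)) (by simp [hxp])
        refine Set.mem_iUnion.2 ⟨i - 1, Set.mem_symmDiff.2 (Or.inr ⟨?_, hprev⟩)⟩
        rwa [show n + (i - 1) + 1 = n + i by omega]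
    have hbound : ∀ n : ℕ, edist (u n) (⟨L, hLmeas⟩ : M) ≤ 2 * (2 : ℝ≥0∞)⁻¹ ^ n := by
      intro n
      rw [hedist]
      calc lam (symmDiff (u n).1 L)
          ≤ lam (⋃ j : ℕ, symmDiff (u (n + j)).1 (u (n + j + 1)).1) :=
            measure_mono (hincl n)
      _ ≤ ∑' j : ℕ, lam (symmDiff (u (n + j)).1 (u (n + j + 1)).1) := measure_iUnion_le _
      _ ≤ ∑' j : ℕ, (2 : ℝ≥0∞)⁻¹ ^ (n + j) := by
            refine ENNReal.tsum_le_tsum fun j => ?_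
            exact le_of_lt (hu (n + j) (n + j) (n + j + 1) le_rfl (Nat.le_succ _))
      _ = 2 * (2 : ℝ≥0∞)⁻¹ ^ n := by
            rw [show (∑' j : ℕ, (2 : ℝ≥0∞)⁻¹ ^ (n + j)) =
              (2 : ℝ≥0∞)⁻¹ ^ n * ∑' j : ℕ, (2 : ℝ≥0∞)⁻¹ ^ j from by
                rw [← ENNReal.tsum_mul_left]
                congr 1
                ext j
                rw [pow_add]]
            rw [ENNReal.tsum_geometric, ENNReal.one_sub_inv_two, inv_inv, mul_comm]
    rw [EMetric.tendsto_atTop]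
    intro ε' hε'
    have htend : Tendsto (fun n : ℕ => 2 * (2 : ℝ≥0∞)⁻¹ ^ n) atTop (nhds 0) := by
      have h2 : Tendsto (fun n : ℕ => ((2 : ℝ≥0∞)⁻¹) ^ n) atTop (nhds 0) :=
        ENNReal.tendsto_pow_atTop_nhds_zero_of_lt_one (by
          rw [ENNReal.inv_lt_one]
          norm_num)
      have := ENNReal.Tendsto.const_mul h2 (Or.inr (by norm_num : (2 : ℝ≥0∞) ≠ ⊤))
      simpa using this
    obtain ⟨N, hN⟩ := eventually_atTop.1 (htend.eventually (gt_mem_nhds hε'))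
    exact ⟨N, fun n hn => lt_of_le_of_lt (hbound n) (hN n hn)⟩
  haveI : Nonempty M := ⟨⟨∅, @MeasurableSet.empty X S⟩⟩
  -- the real-valued evaluation maps are continuous
  have hlip : ∀ (ρ : @MeasureTheory.Measure X m0) (cc : ℝ≥0∞), IsFiniteMeasure ρ → cc ≠ ⊤ →
      (∀ A : Set X, MeasurableSet[S] A → ρ A ≤ cc * lam A) →
      Continuous (fun A : M => (ρ A.1).toReal) := by
    intro ρ cc hρfin hcc hle
    haveI := hρfin
    refine LipschitzWith.continuous (K := cc.toNNReal) ?_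
    intro A B
    rw [edist_dist, Real.dist_eq, hedist]
    have h1 : |(ρ A.1).toReal - (ρ B.1).toReal| ≤ (ρ (symmDiff A.1 B.1)).toReal :=
      @abs_toReal_sub_le_symmDiff X m0 ρ hρfin A.1 B.1
    have hm : MeasurableSet[S] (symmDiff A.1 B.1) :=
      (A.2.diff B.2).union (B.2.diff A.2)
    have h2 : (ρ (symmDiff A.1 B.1)).toReal ≤ (cc * lam (symmDiff A.1 B.1)).toReal :=
      ENNReal.toReal_mono (ENNReal.mul_ne_top hcc (measure_ne_top _ _)) (hle _ hm)
    calc ENNReal.ofReal |(ρ A.1).toReal - (ρ B.1).toReal|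
        ≤ ENNReal.ofReal ((cc * lam (symmDiff A.1 B.1)).toReal) :=
          ENNReal.ofReal_le_ofReal (h1.trans h2)
    _ = cc * lam (symmDiff A.1 B.1) :=
          ENNReal.ofReal_toReal (ENNReal.mul_ne_top hcc (measure_ne_top _ _))
    _ = (cc.toNNReal : ℝ≥0∞) * lam (symmDiff A.1 B.1) := by
          rw [ENNReal.coe_toNNReal hcc]
  have hcontn : ∀ n, Continuous (fun A : M => (μs n A.1).toReal) :=
    fun n => hlip (μs n) (c n) (hfin n) (hc n) (hcle n)
  have hcontμ : Continuous (fun A : M => (μ A.1).toReal) :=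
    hlip μ 1 inferInstance (by simp) (fun A hA => by simpa using hμle A hA)
  -- Baire category argument
  set F : ℕ → Set M := fun N =>
    {A : M | ∀ n, N ≤ n → |(μs n A.1).toReal - (μ A.1).toReal| ≤ ε / 3} with hF
  have hclosed : ∀ N, IsClosed (F N) := by
    intro N
    have : F N = ⋂ n, ⋂ (_ : N ≤ n),
        {A : M | |(μs n A.1).toReal - (μ A.1).toReal| ≤ ε / 3} := by
      ext A; simp [hF]
    rw [this]
    refine isClosed_iInter fun n => isClosed_iInter fun _ => ?_
    exact isClosed_le (((hcontn n).sub hcontμ).abs) continuous_const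
  have hcover : ⋃ N, F N = Set.univ := by
    ext A
    simp only [Set.mem_iUnion, Set.mem_univ, iff_true]
    have ht : Tendsto (fun n => (μs n A.1).toReal) atTop (nhds (μ A.1).toReal) :=
      (ENNReal.tendsto_toReal (measure_ne_top μ A.1)).comp (hconv A.1 A.2)
    obtain ⟨N, hN⟩ := eventually_atTop.1
      (ht.eventually (Metric.closedBall_mem_nhds _ (by positivity : (0:ℝ) < ε / 3)))
    refine ⟨N, fun n hn => ?_⟩
    have h := hN n hn
    change dist (μs n A.1).toReal (μ A.1).toReal ≤ ε / 3 at h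
    rw [Real.dist_eq] at h
    exact h
  obtain ⟨N, hNint⟩ := nonempty_interior_of_iUnion_of_closed hclosed hcover
  obtain ⟨A₀, hA₀⟩ := hNint
  rw [mem_interior_iff_mem_nhds] at hA₀
  obtain ⟨η, hη0, hball⟩ := EMetric.mem_nhds_iff.1 hA₀
  -- choice of δ
  set η' : ℝ≥0∞ := min η 1 with hη'
  have hη'0 : 0 < η' := lt_min hη0 one_pos
  have hη'top : η' ≠ ⊤ := ne_top_of_le_ne_top (by simp) (min_le_right _ _)
  set δ : ℝ≥0∞ := min (min (η' / 2) (ENNReal.ofReal (ε / 3)))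
    ((Finset.range N).inf fun n => (c n)⁻¹ * ENNReal.ofReal ε) with hδdef
  have hδpos : 0 < δ := by
    refine lt_min (lt_min ?_ ?_) ?_
    · exact ENNReal.div_pos (ne_of_gt hη'0) (by norm_num)
    · exact ENNReal.ofReal_pos.2 (by positivity)
    · refine (Finset.lt_inf_iff (by norm_num : (0 : ℝ≥0∞) < ⊤)).2 fun n _ => ?_
      exact ENNReal.mul_pos (ENNReal.inv_ne_zero.2 (hc n)) (ne_of_gt (ENNReal.ofReal_pos.2 hε))
  refine ⟨δ, hδpos, ?_⟩
  intro B hB hBδ n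
  by_cases hn : N ≤ n
  · -- large n: use the ball around A₀
    set A₁ : M := ⟨A₀.1 ∪ B, A₀.2.union hB⟩ with hA₁
    set A₂ : M := ⟨A₀.1 \ B, A₀.2.diff hB⟩ with hA₂
    have hδη : δ < η := by
      calc δ ≤ η' / 2 := le_trans (min_le_left _ _) (min_le_left _ _)
      _ < η' := ENNReal.half_lt_self (ne_of_gt hη'0) hη'top
      _ ≤ η := min_le_left _ _
    have hmem1 : A₁ ∈ F N := by
      refine hball ?_
      rw [EMetric.mem_ball, hedist]
      refine lt_of_le_of_lt (le_trans (measure_mono ?_) hBδ) hδη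
      intro x hx
      rw [Set.mem_symmDiff] at hx
      rcases hx with ⟨hx1, hx2⟩ | ⟨hx1, hx2⟩
      · rcases hx1 with h | h
        · exact absurd h hx2
        · exact h
      · exact absurd (Or.inl hx1) hx2
    have hmem2 : A₂ ∈ F N := by
      refine hball ?_
      rw [EMetric.mem_ball, hedist]
      refine lt_of_le_of_lt (le_trans (measure_mono ?_) hBδ) hδη
      intro x hx
      rw [Set.mem_symmDiff] at hx
      rcases hx with ⟨hx1, hx2⟩ | ⟨hx1, hx2⟩
      · exact absurd hx1.1 (fun h => hx2 h)
      · by_contra hxB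
        exact hx2 ⟨hx1, hxB⟩
    haveI := hfin n
    have h1 : |(μs n (A₀.1 ∪ B)).toReal - (μ (A₀.1 ∪ B)).toReal| ≤ ε / 3 := hmem1 n hn
    have h2 : |(μs n (A₀.1 \ B)).toReal - (μ (A₀.1 \ B)).toReal| ≤ ε / 3 := hmem2 n hn
    -- additivity
    have hdisj : Disjoint (A₀.1 \ B) B := disjoint_sdiff_left
    have huni : A₀.1 \ B ∪ B = A₀.1 ∪ B := by
      ext x
      by_cases hxB : x ∈ B <;> simp [hxB]
    have hsum1 : μs n (A₀.1 ∪ B) = μs n (A₀.1 \ B) + μs n B := by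
      rw [← huni]
      exact measure_union hdisj (hS _ hB)
    have hsum2 : μ (A₀.1 ∪ B) = μ (A₀.1 \ B) + μ B := by
      rw [← huni]
      exact measure_union hdisj (hS _ hB)
    have htr1 : (μs n (A₀.1 ∪ B)).toReal
        = (μs n (A₀.1 \ B)).toReal + (μs n B).toReal := by
      rw [hsum1, ENNReal.toReal_add (measure_ne_top _ _) (measure_ne_top _ _)]
    have htr2 : (μ (A₀.1 ∪ B)).toReal = (μ (A₀.1 \ B)).toReal + (μ B).toReal := by
      rw [hsum2, ENNReal.toReal_add (measure_ne_top _ _) (measure_ne_top _ _)]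
    have hμB : (μ B).toReal ≤ ε / 3 := by
      have hle1 : μ B ≤ ENNReal.ofReal (ε / 3) := by
        refine le_trans (hμle B hB) (le_trans hBδ ?_)
        exact le_trans (min_le_left _ _) (min_le_right _ _)
      exact (ENNReal.le_ofReal_iff_toReal_le (measure_ne_top _ _) (by positivity)).1 hle1
    have hfinal : (μs n B).toReal ≤ ε := by linarith [abs_le.1 h1, abs_le.1 h2]
    exact (ENNReal.le_ofReal_iff_toReal_le (measure_ne_top _ _) hε.le).2 hfinal
  · -- small n: use domination
    push_neg at hn
    have hδn : δ ≤ (c n)⁻¹ * ENNReal.ofReal ε :=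
      le_trans (min_le_right _ _) (Finset.inf_le (Finset.mem_range.2 hn))
    calc μs n B ≤ c n * lam B := hcle n B hB
    _ ≤ c n * ((c n)⁻¹ * ENNReal.ofReal ε) :=
        mul_le_mul_right (le_trans hBδ hδn) _
    _ = ENNReal.ofReal ε := by
        rw [← mul_assoc, ENNReal.mul_inv_cancel (hc0 n) (hc n), one_mul]

end UAC

/-- **Uniform convergence of measures over a VC class (Gaenssler–Stute).** If `𝒞` is a
separable VC class and `{μₙ}` are finite measures with `μₙ(A) → μ(A)` for every
`A ∈ σ(𝒞)`, then the convergence is uniform over `𝒞`. -/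
theorem uniform_convergence_over_vc {X : Type*} [MeasurableSpace X]
    (μ : Measure X) [IsProbabilityMeasure μ] (𝒞 : Set (Set X))
    (h𝒞 : ∀ C ∈ 𝒞, MeasurableSet C) (hsep : SeparableSetFamily 𝒞) (hVC : FiniteVC 𝒞)
    (μs : ℕ → Measure X) (hfin : ∀ n, IsFiniteMeasure (μs n))
    (hconv : ∀ A : Set X, MeasurableSet[MeasurableSpace.generateFrom 𝒞] A →
      Filter.Tendsto (fun n => μs n A) Filter.atTop (nhds (μ A))) :
    Filter.Tendsto
      (fun n => ⨆ C : 𝒞, |(μs n (C : Set X)).toReal - (μ (C : Set X)).toReal|)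
      Filter.atTop (nhds 0) := by
  classical
  rcases Set.eq_empty_or_nonempty 𝒞 with h𝒞e | h𝒞ne
  · haveI : IsEmpty ↥𝒞 := Set.isEmpty_coe_sort.2 h𝒞e
    simpa [Real.iSup_of_isEmpty] using
      (tendsto_const_nhds : Tendsto (fun _ : ℕ => (0:ℝ)) atTop (nhds 0))
  have hS : MeasurableSpace.generateFrom 𝒞 ≤ ‹MeasurableSpace X› :=
    MeasurableSpace.generateFrom_le h𝒞
  -- the dominating finite measure
  set c : ℕ → ℝ≥0∞ := fun n => 2 ^ (n + 1) * (μs n Set.univ + 1) with hc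
  have hc0 : ∀ n, c n ≠ 0 := by
    intro n
    refine mul_ne_zero (by positivity) ?_
    simp
  have hctop : ∀ n, c n ≠ ⊤ := by
    intro n
    exact ENNReal.mul_ne_top (by simp [ENNReal.pow_ne_top]) (by simp [measure_ne_top (μs n)])
  set lam : Measure X := μ + Measure.sum (fun n => (c n)⁻¹ • μs n) with hlam
  have hlam_apply : ∀ A : Set X, MeasurableSet A →
      lam A = μ A + ∑' n, (c n)⁻¹ * μs n A := by
    intro A hA
    rw [hlam, Measure.add_apply, Measure.sum_apply _ hA]
    simp only [Measure.smul_apply, smul_eq_mul]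
  have hμle : ∀ A : Set X, MeasurableSet[MeasurableSpace.generateFrom 𝒞] A → μ A ≤ lam A := by
    intro A _
    rw [hlam]
    simp only [Measure.add_apply]
    exact le_self_add
  have hcle : ∀ n, ∀ A : Set X, MeasurableSet[MeasurableSpace.generateFrom 𝒞] A → μs n A ≤ c n * lam A := by
    intro n A hA
    have hAm : MeasurableSet A := hS _ hA
    have h1 : (c n)⁻¹ * μs n A ≤ lam A := by
      rw [hlam_apply A hAm]
      calc (c n)⁻¹ * μs n A ≤ ∑' m, (c m)⁻¹ * μs m A := ENNReal.le_tsum n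
      _ ≤ μ A + ∑' m, (c m)⁻¹ * μs m A := le_add_self
    calc μs n A = c n * ((c n)⁻¹ * μs n A) := by
          rw [← mul_assoc, ENNReal.mul_inv_cancel (hc0 n) (hctop n), one_mul]
    _ ≤ c n * lam A := mul_le_mul_right h1 _
  haveI hlamfin : IsFiniteMeasure lam := by
    constructor
    have h2 : (∑' n, (c n)⁻¹ * μs n Set.univ) ≤ ∑' n : ℕ, (2 : ℝ≥0∞)⁻¹ ^ n := by
      refine ENNReal.tsum_le_tsum fun n => ?_
      have hinv : (c n)⁻¹ = (2 ^ (n + 1) : ℝ≥0∞)⁻¹ * (μs n Set.univ + 1)⁻¹ := by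
        rw [hc]
        exact ENNReal.mul_inv (Or.inl (by positivity)) (Or.inl (by simp [ENNReal.pow_ne_top]))
      rw [hinv, mul_assoc]
      have h3 : (μs n Set.univ + 1)⁻¹ * μs n Set.univ ≤ 1 := by
        calc (μs n Set.univ + 1)⁻¹ * μs n Set.univ
            ≤ (μs n Set.univ + 1)⁻¹ * (μs n Set.univ + 1) :=
              mul_le_mul_right (self_le_add_right _ _) _
        _ = 1 := ENNReal.inv_mul_cancel (by simp) (by simp [measure_ne_top (μs n)])
      calc (2 ^ (n + 1) : ℝ≥0∞)⁻¹ * ((μs n Set.univ + 1)⁻¹ * μs n Set.univ)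
          ≤ (2 ^ (n + 1) : ℝ≥0∞)⁻¹ * 1 := mul_le_mul_right h3 _
      _ = (2 : ℝ≥0∞)⁻¹ ^ (n + 1) := by rw [mul_one, ← ENNReal.inv_pow]
      _ = (2 : ℝ≥0∞)⁻¹ ^ n * 2⁻¹ := by rw [pow_succ]
      _ ≤ (2 : ℝ≥0∞)⁻¹ ^ n * 1 := mul_le_mul_right (by norm_num) _
      _ = (2 : ℝ≥0∞)⁻¹ ^ n := mul_one _
    have h4 : (∑' n : ℕ, (2 : ℝ≥0∞)⁻¹ ^ n) = 2 := by
      rw [ENNReal.tsum_geometric, ENNReal.one_sub_inv_two, inv_inv]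
    have h5 : lam Set.univ ≤ μ Set.univ + 2 := by
      rw [hlam_apply _ MeasurableSet.univ]
      exact add_le_add_right (h2.trans (le_of_eq h4)) _
    refine lt_of_le_of_lt h5 ?_
    rw [measure_univ]
    norm_num
  -- lam is nonzero
  have hlamuniv1 : (1 : ℝ≥0∞) ≤ lam Set.univ := by
    have := hμle Set.univ MeasurableSet.univ
    rwa [measure_univ] at this
  have hlamne0 : lam Set.univ ≠ 0 := by
    intro h
    rw [h] at hlamuniv1
    simp at hlamuniv1
  have hlamnetop : lam Set.univ ≠ ⊤ := measure_ne_top lam _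
  haveI : NeZero lam := ⟨Measure.measure_univ_ne_zero.1 hlamne0⟩
  set ν : Measure X := (lam Set.univ)⁻¹ • lam with hν
  haveI : IsProbabilityMeasure ν := isProbabilityMeasureSMul
  -- main estimate
  rw [Metric.tendsto_atTop]
  intro ε hε
  set ε' : ℝ := ε / 4 with hε'def
  have hε' : 0 < ε' := by positivity
  obtain ⟨δ₁, hδ₁pos, hδ₁⟩ := uniform_ac (MeasurableSpace.generateFrom 𝒞) hS lam μ μs hfin hμle c hc0 hctop hcle hconv ε' hε'
  set δ : ℝ≥0∞ := min δ₁ (ENNReal.ofReal ε') with hδdef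
  have hδpos : 0 < δ := lt_min hδ₁pos (ENNReal.ofReal_pos.2 hε')
  have hδν : 0 < (lam Set.univ)⁻¹ * δ :=
    ENNReal.mul_pos (ENNReal.inv_ne_zero.2 hlamnetop) (ne_of_gt hδpos)
  obtain ⟨F, hF𝒞, hFnet⟩ := exists_net ν 𝒞 h𝒞 hVC hδν
  have hFnet' : ∀ C ∈ 𝒞, ∃ D ∈ F, lam (symmDiff C D) ≤ δ := by
    intro C hC
    obtain ⟨D, hD, hle⟩ := hFnet C hC
    refine ⟨D, hD, ?_⟩
    have heq : lam (symmDiff C D) = lam Set.univ * ν (symmDiff C D) := by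
      rw [hν, Measure.smul_apply, smul_eq_mul, ← mul_assoc,
        ENNReal.mul_inv_cancel hlamne0 hlamnetop, one_mul]
    rw [heq]
    calc lam Set.univ * ν (symmDiff C D)
        ≤ lam Set.univ * ((lam Set.univ)⁻¹ * δ) := mul_le_mul_right hle _
    _ = δ := by rw [← mul_assoc, ENNReal.mul_inv_cancel hlamne0 hlamnetop, one_mul]
  -- eventually the net converges
  have hFconv : ∀ᶠ n in atTop, ∀ D ∈ F, |(μs n D).toReal - (μ D).toReal| ≤ ε' := by
    rw [eventually_all_finset]
    intro D hD
    have hDS : MeasurableSet[MeasurableSpace.generateFrom 𝒞] D := MeasurableSpace.measurableSet_generateFrom (hF𝒞 hD)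
    have ht : Tendsto (fun n => (μs n D).toReal) atTop (nhds (μ D).toReal) :=
      (ENNReal.tendsto_toReal (measure_ne_top μ D)).comp (hconv D hDS)
    filter_upwards [ht.eventually (Metric.closedBall_mem_nhds _ hε')] with n hn
    simpa [Metric.mem_closedBall, Real.dist_eq] using hn
  obtain ⟨N, hN⟩ := eventually_atTop.1 hFconv
  refine ⟨N, fun n hn => ?_⟩
  have hsup : (⨆ C : 𝒞, |(μs n (C : Set X)).toReal - (μ (C : Set X)).toReal|) ≤ 3 * ε' := by
    refine Real.iSup_le (fun C => ?_) (by positivity)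
    obtain ⟨D, hD, hlamΔ⟩ := hFnet' C.1 C.2
    have hΔS : MeasurableSet[MeasurableSpace.generateFrom 𝒞] (symmDiff (C : Set X) D) := by
      have hCS : MeasurableSet[MeasurableSpace.generateFrom 𝒞] (C : Set X) := MeasurableSpace.measurableSet_generateFrom C.2
      have hDS : MeasurableSet[MeasurableSpace.generateFrom 𝒞] D := MeasurableSpace.measurableSet_generateFrom (hF𝒞 hD)
      exact (hCS.diff hDS).union (hDS.diff hCS)
    haveI := hfin n
    have h1 : |(μs n (C : Set X)).toReal - (μs n D).toReal|
        ≤ (μs n (symmDiff (C : Set X) D)).toReal := abs_toReal_sub_le_symmDiff (μs n) _ _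
    have h2 : (μs n (symmDiff (C : Set X) D)).toReal ≤ ε' := by
      have := hδ₁ _ hΔS (le_trans hlamΔ (min_le_left _ _)) n
      exact (ENNReal.le_ofReal_iff_toReal_le (measure_ne_top _ _) hε'.le).1 this
    have h3 : |(μ (C : Set X)).toReal - (μ D).toReal| ≤ ε' := by
      refine le_trans (abs_toReal_sub_le_symmDiff μ _ _) ?_
      have hμΔ : μ (symmDiff (C : Set X) D) ≤ ENNReal.ofReal ε' :=
        le_trans (hμle _ hΔS) (le_trans hlamΔ (min_le_right _ _))
      exact (ENNReal.le_ofReal_iff_toReal_le (measure_ne_top _ _) hε'.le).1 hμΔ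
    have h4 : |(μs n D).toReal - (μ D).toReal| ≤ ε' := hN n hn D hD
    have t1 := abs_sub_le ((μs n (C : Set X)).toReal) ((μs n D).toReal) ((μ (C : Set X)).toReal)
    have t2 := abs_sub_le ((μs n D).toReal) ((μ D).toReal) ((μ (C : Set X)).toReal)
    have t3 : |(μ D).toReal - (μ (C : Set X)).toReal|
        = |(μ (C : Set X)).toReal - (μ D).toReal| := abs_sub_comm _ _
    linarith
  have hsupnn : 0 ≤ ⨆ C : 𝒞, |(μs n (C : Set X)).toReal - (μ (C : Set X)).toReal| :=
    Real.iSup_nonneg fun C => abs_nonneg _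
  rw [Real.dist_eq, sub_zero, abs_of_nonneg hsupnn]
  refine lt_of_le_of_lt hsup ?_
  rw [hε'def]
  linarith
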